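/- For every L ∈ W, the image π(L) = fst(L) is an l-dimensional subspace of E₁; the resulting map π from W to the set of all l-dimensional subspaces of E₁ (the Grassmannian G(l,k)) is surjective; and for every strictly increasing map I : Fin l → Fin k there exists a bijection from the set {L ∈ W : π(L) ∈ V_I} to the product V_I × Matrix(Fin(n−k), Fin l, ℂ) whose first component is L ↦ π(L) (a set-theoretic trivialization of π over V_I with fibre the affine space of (n−k) × l complex matrices). -/

import Mathlib

/-- The subspace of `Fin k → ℂ` consisting of vectors vanishing at all the coordinates
selected by `I : Fin l → Fin k`. -/
noncomputable def coordKer (k l : ℕ) (I : Fin l → Fin k) : Submodule ℂ (Fin k → ℂ) :=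
  ⨅ r : Fin l, LinearMap.ker (LinearMap.proj (I r) : (Fin k → ℂ) →ₗ[ℂ] ℂ)

namespace GrassAux

variable {K M N : Type*} [Field K] [AddCommGroup M] [AddCommGroup N] [Module K M] [Module K N]

/-- equiv from `p` to `p.map f` when `p ⊓ ker f = ⊥`. -/
noncomputable def emap (f : M →ₗ[K] N) (p : Submodule K M) (h : p ⊓ LinearMap.ker f = ⊥) :
    p ≃ₗ[K] (p.map f) :=
  LinearEquiv.ofBijective ((f.domRestrict p).codRestrict (p.map f)
      (fun x => Submodule.mem_map_of_mem x.2))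
    ⟨fun x y hxy => LinearMap.injective_domRestrict_iff.mpr (disjoint_iff.mpr h)
        (congrArg Subtype.val hxy),
     fun y => by
       obtain ⟨x, hx, hxy⟩ := y.2
       exact ⟨⟨x, hx⟩, Subtype.ext hxy⟩⟩

@[simp] theorem emap_apply (f : M →ₗ[K] N) (p : Submodule K M)
    (h : p ⊓ LinearMap.ker f = ⊥) (x : p) : ((emap f p h x : p.map f) : N) = f x := rfl

theorem emap_symm_val (f : M →ₗ[K] N) (p : Submodule K M)
    (h : p ⊓ LinearMap.ker f = ⊥) (y : p.map f) :
    f (((emap f p h).symm y : p) : M) = y := by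
  conv_rhs => rw [← (emap f p h).apply_symm_apply y]
  rfl

variable (k l : ℕ) (I : Fin l → Fin k)

/-- the coordinate-selection map. -/
noncomputable def pI : (Fin k → ℂ) →ₗ[ℂ] (Fin l → ℂ) := LinearMap.funLeft ℂ ℂ I

theorem ker_pI : LinearMap.ker (pI k l I) = coordKer k l I := by
  ext x
  simp [pI, coordKer, LinearMap.funLeft, Submodule.mem_iInf, funext_iff]

/-- the chart equivalence. -/
noncomputable def phi (U : Submodule ℂ (Fin k → ℂ)) (h1 : Module.finrank ℂ U = l)
    (h2 : U ⊓ coordKer k l I = ⊥) : U ≃ₗ[ℂ] (Fin l → ℂ) := by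
  have hker : U ⊓ LinearMap.ker (pI k l I) = ⊥ := by rw [ker_pI]; exact h2
  have hinj : Function.Injective ((pI k l I).domRestrict U) :=
    LinearMap.injective_domRestrict_iff.mpr (disjoint_iff.mpr hker)
  refine LinearEquiv.ofBijective ((pI k l I).domRestrict U) ⟨hinj, ?_⟩
  have : Module.finrank ℂ U = Module.finrank ℂ (Fin l → ℂ) := by
    rw [h1, Module.finrank_fin_fun]
  exact (LinearMap.injective_iff_surjective_of_finrank_eq_finrank this).mp hinj

@[simp] theorem phi_apply (U : Submodule ℂ (Fin k → ℂ)) (h1 : Module.finrank ℂ U = l)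
    (h2 : U ⊓ coordKer k l I = ⊥) (u : U) :
    phi k l I U h1 h2 u = pI k l I (u : Fin k → ℂ) := rfl

theorem pI_phi_symm (U : Submodule ℂ (Fin k → ℂ)) (h1 : Module.finrank ℂ U = l)
    (h2 : U ⊓ coordKer k l I = ⊥) (v : Fin l → ℂ) :
    pI k l I (((phi k l I U h1 h2).symm v : U) : Fin k → ℂ) = v := by
  conv_rhs => rw [← (phi k l I U h1 h2).apply_symm_apply v]
  rfl


variable (n : ℕ)

/-- the projection. -/
noncomputable abbrev fstL : (Fin k → ℂ) × (Fin (n - k) → ℂ) →ₗ[ℂ] (Fin k → ℂ) :=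
  LinearMap.fst ℂ (Fin k → ℂ) (Fin (n - k) → ℂ)

noncomputable abbrev sndL : (Fin k → ℂ) × (Fin (n - k) → ℂ) →ₗ[ℂ] (Fin (n - k) → ℂ) :=
  LinearMap.snd ℂ (Fin k → ℂ) (Fin (n - k) → ℂ)

/-- the graph parametrization. -/
noncomputable def graphMap (U : Submodule ℂ (Fin k → ℂ)) (h1 : Module.finrank ℂ U = l)
    (h2 : U ⊓ coordKer k l I = ⊥) (Mt : Matrix (Fin (n - k)) (Fin l) ℂ) :
    (Fin l → ℂ) →ₗ[ℂ] (Fin k → ℂ) × (Fin (n - k) → ℂ) :=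
  (U.subtype ∘ₗ ((phi k l I U h1 h2).symm : (Fin l → ℂ) →ₗ[ℂ] U)).prod (Matrix.mulVecLin Mt)

@[simp] theorem graphMap_apply (U : Submodule ℂ (Fin k → ℂ)) (h1 : Module.finrank ℂ U = l)
    (h2 : U ⊓ coordKer k l I = ⊥) (Mt : Matrix (Fin (n - k)) (Fin l) ℂ) (v : Fin l → ℂ) :
    graphMap k l I n U h1 h2 Mt v =
      ((((phi k l I U h1 h2).symm v : U) : Fin k → ℂ), Mt.mulVec v) := rfl

theorem graphMap_injective (U : Submodule ℂ (Fin k → ℂ)) (h1 : Module.finrank ℂ U = l)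
    (h2 : U ⊓ coordKer k l I = ⊥) (Mt : Matrix (Fin (n - k)) (Fin l) ℂ) :
    Function.Injective (graphMap k l I n U h1 h2 Mt) := by
  intro v w hvw
  have h1' := congrArg Prod.fst hvw
  simp only [graphMap_apply] at h1'
  have := congrArg (pI k l I) h1'
  rwa [pI_phi_symm, pI_phi_symm] at this

theorem graphL_finrank (U : Submodule ℂ (Fin k → ℂ)) (h1 : Module.finrank ℂ U = l)
    (h2 : U ⊓ coordKer k l I = ⊥) (Mt : Matrix (Fin (n - k)) (Fin l) ℂ) :
    Module.finrank ℂ (LinearMap.range (graphMap k l I n U h1 h2 Mt)) = l := by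
  rw [LinearMap.finrank_range_of_inj (graphMap_injective k l I n U h1 h2 Mt),
    Module.finrank_fin_fun]

theorem graphL_inf_ker (U : Submodule ℂ (Fin k → ℂ)) (h1 : Module.finrank ℂ U = l)
    (h2 : U ⊓ coordKer k l I = ⊥) (Mt : Matrix (Fin (n - k)) (Fin l) ℂ) :
    LinearMap.range (graphMap k l I n U h1 h2 Mt) ⊓ LinearMap.ker (fstL k n) = ⊥ := by
  rw [Submodule.eq_bot_iff]
  rintro x ⟨⟨v, rfl⟩, hx2⟩
  have hv : (((phi k l I U h1 h2).symm v : U) : Fin k → ℂ) = 0 := hx2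
  have : v = 0 := by
    have := congrArg (pI k l I) hv
    rwa [pI_phi_symm, map_zero] at this
  simp [this]

theorem graphL_map_fst (U : Submodule ℂ (Fin k → ℂ)) (h1 : Module.finrank ℂ U = l)
    (h2 : U ⊓ coordKer k l I = ⊥) (Mt : Matrix (Fin (n - k)) (Fin l) ℂ) :
    (LinearMap.range (graphMap k l I n U h1 h2 Mt)).map (fstL k n) = U := by
  rw [← LinearMap.range_comp]
  have : (fstL k n) ∘ₗ graphMap k l I n U h1 h2 Mt
      = U.subtype ∘ₗ ((phi k l I U h1 h2).symm : (Fin l → ℂ) →ₗ[ℂ] U) := rfl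
  rw [this, LinearMap.range_comp, LinearEquiv.range, Submodule.map_top,
    Submodule.range_subtype]


/-- The slope map recovered from a graph. -/
noncomputable def psiMap (L : Submodule ℂ ((Fin k → ℂ) × (Fin (n - k) → ℂ)))
    (hker : L ⊓ LinearMap.ker (fstL k n) = ⊥)
    (h1 : Module.finrank ℂ (L.map (fstL k n)) = l)
    (h2 : L.map (fstL k n) ⊓ coordKer k l I = ⊥) :
    (Fin l → ℂ) →ₗ[ℂ] (Fin (n - k) → ℂ) :=
  ((sndL k n).domRestrict L) ∘ₗ
    (((emap (fstL k n) L hker).symm : (L.map (fstL k n)) →ₗ[ℂ] L) ∘ₗ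
      ((phi k l I (L.map (fstL k n)) h1 h2).symm : (Fin l → ℂ) →ₗ[ℂ] (L.map (fstL k n))))

theorem psiMap_apply (L : Submodule ℂ ((Fin k → ℂ) × (Fin (n - k) → ℂ)))
    (hker : L ⊓ LinearMap.ker (fstL k n) = ⊥)
    (h1 : Module.finrank ℂ (L.map (fstL k n)) = l)
    (h2 : L.map (fstL k n) ⊓ coordKer k l I = ⊥) (v : Fin l → ℂ) :
    psiMap k l I n L hker h1 h2 v =
      sndL k n ((((emap (fstL k n) L hker).symm
        ((phi k l I (L.map (fstL k n)) h1 h2).symm v) : L) :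
          (Fin k → ℂ) × (Fin (n - k) → ℂ))) := rfl

theorem mulVec_toMatrix' {m p : ℕ} (f : (Fin m → ℂ) →ₗ[ℂ] (Fin p → ℂ)) (v : Fin m → ℂ) :
    (LinearMap.toMatrix' f).mulVec v = f v := by
  rw [← Matrix.mulVecLin_apply, ← Matrix.toLin'_apply', Matrix.toLin'_toMatrix']

/-- Left-inverse computation. -/
theorem graphL_psiMap (L : Submodule ℂ ((Fin k → ℂ) × (Fin (n - k) → ℂ)))
    (hker : L ⊓ LinearMap.ker (fstL k n) = ⊥)
    (h1 : Module.finrank ℂ (L.map (fstL k n)) = l)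
    (h2 : L.map (fstL k n) ⊓ coordKer k l I = ⊥) :
    LinearMap.range (graphMap k l I n (L.map (fstL k n)) h1 h2
      (LinearMap.toMatrix' (psiMap k l I n L hker h1 h2))) = L := by
  apply le_antisymm
  · rintro x ⟨v, rfl⟩
    set u := (phi k l I (L.map (fstL k n)) h1 h2).symm v with hu
    set w := (emap (fstL k n) L hker).symm u with hw
    have hsnd : (LinearMap.toMatrix' (psiMap k l I n L hker h1 h2)).mulVec v
        = sndL k n (w : _) := by
      rw [mulVec_toMatrix', psiMap_apply]
    have hfst : ((u : Fin k → ℂ)) = fstL k n (w : _) := (emap_symm_val _ _ _ u).symm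
    have : graphMap k l I n (L.map (fstL k n)) h1 h2
        (LinearMap.toMatrix' (psiMap k l I n L hker h1 h2)) v
        = (w : (Fin k → ℂ) × (Fin (n - k) → ℂ)) := by
      rw [graphMap_apply, hsnd]
      exact Prod.ext hfst rfl
    rw [this]
    exact w.2
  · intro x hx
    refine ⟨phi k l I (L.map (fstL k n)) h1 h2 (emap (fstL k n) L hker ⟨x, hx⟩), ?_⟩
    rw [graphMap_apply, LinearEquiv.symm_apply_apply, mulVec_toMatrix', psiMap_apply,
      LinearEquiv.symm_apply_apply, LinearEquiv.symm_apply_apply]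
    exact Prod.ext rfl rfl

/-- Right-inverse computation. -/
theorem psiMap_graphL (U : Submodule ℂ (Fin k → ℂ)) (h1 : Module.finrank ℂ U = l)
    (h2 : U ⊓ coordKer k l I = ⊥) (Mt : Matrix (Fin (n - k)) (Fin l) ℂ)
    (hker' : LinearMap.range (graphMap k l I n U h1 h2 Mt) ⊓ LinearMap.ker (fstL k n) = ⊥)
    (h1' : Module.finrank ℂ
      ((LinearMap.range (graphMap k l I n U h1 h2 Mt)).map (fstL k n)) = l)
    (h2' : (LinearMap.range (graphMap k l I n U h1 h2 Mt)).map (fstL k n)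
      ⊓ coordKer k l I = ⊥) :
    LinearMap.toMatrix'
      (psiMap k l I n (LinearMap.range (graphMap k l I n U h1 h2 Mt)) hker' h1' h2') = Mt := by
  have key : psiMap k l I n (LinearMap.range (graphMap k l I n U h1 h2 Mt)) hker' h1' h2'
      = Matrix.mulVecLin Mt := by
    apply LinearMap.ext
    intro v
    set LG := LinearMap.range (graphMap k l I n U h1 h2 Mt) with hLG
    set x := (emap (fstL k n) LG hker').symm
      ((phi k l I (LG.map (fstL k n)) h1' h2').symm v) with hxdef
    have hψv : psiMap k l I n LG hker' h1' h2' v = sndL k n (x : _) := rfl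
    obtain ⟨w, hw⟩ := x.2
    have hfst : fstL k n (x : _) =
        (((phi k l I (LG.map (fstL k n)) h1' h2').symm v :
          LG.map (fstL k n)) : Fin k → ℂ) := emap_symm_val _ _ _ _
    have hpv : pI k l I (fstL k n (x : _)) = v := by rw [hfst]; exact pI_phi_symm ..
    have hfw : fstL k n (x : _) = (((phi k l I U h1 h2).symm w : U) : Fin k → ℂ) := by
      rw [← hw]; rfl
    have hwv : w = v := by rw [← hpv, hfw, pI_phi_symm]
    have hsx : sndL k n (x : _) = Mt.mulVec w := by rw [← hw]; rfl
    rw [hψv, hsx, hwv, Matrix.mulVecLin_apply]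
  rw [key, ← Matrix.toLin'_apply', LinearMap.toMatrix'_toLin']

end GrassAux


open GrassAux

/-- Lemma 4.4 of the paper: with `W` the set of `l`-dimensional subspaces `L` of
`E₁ × E₂ = (Fin k → ℂ) × (Fin (n-k) → ℂ)` with `L ∩ ker fst = 0`, the assignment
`π(L) = fst(L)` lands in `l`-dimensional subspaces of `E₁`, is surjective onto the
Grassmannian `G(l,k)` of all such subspaces, and over each chart
`V_I = {U : dim U = l, U ∩ coordKer I = 0}` it trivializes, with fibre the affine space of
`(n-k) × l` complex matrices. -/
theorem grassmann_fibration_trivializes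
    (n k l : ℕ) (hl : 1 ≤ l) (hlk : l ≤ k) (hkn : k ≤ n) :
    (∀ L : Submodule ℂ ((Fin k → ℂ) × (Fin (n - k) → ℂ)),
        Module.finrank ℂ L = l →
        L ⊓ LinearMap.ker (LinearMap.fst ℂ (Fin k → ℂ) (Fin (n - k) → ℂ)) = ⊥ →
        Module.finrank ℂ
          (L.map (LinearMap.fst ℂ (Fin k → ℂ) (Fin (n - k) → ℂ))) = l) ∧
    (∀ U : Submodule ℂ (Fin k → ℂ), Module.finrank ℂ U = l →
      ∃ L : Submodule ℂ ((Fin k → ℂ) × (Fin (n - k) → ℂ)),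
        Module.finrank ℂ L = l ∧
        L ⊓ LinearMap.ker (LinearMap.fst ℂ (Fin k → ℂ) (Fin (n - k) → ℂ)) = ⊥ ∧
        L.map (LinearMap.fst ℂ (Fin k → ℂ) (Fin (n - k) → ℂ)) = U) ∧
    (∀ I : Fin l → Fin k, StrictMono I →
      ∃ e : {L : Submodule ℂ ((Fin k → ℂ) × (Fin (n - k) → ℂ)) //
              (Module.finrank ℂ L = l ∧
                L ⊓ LinearMap.ker (LinearMap.fst ℂ (Fin k → ℂ) (Fin (n - k) → ℂ)) = ⊥) ∧
              (Module.finrank ℂ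
                  (L.map (LinearMap.fst ℂ (Fin k → ℂ) (Fin (n - k) → ℂ))) = l ∧
                L.map (LinearMap.fst ℂ (Fin k → ℂ) (Fin (n - k) → ℂ)) ⊓
                  coordKer k l I = ⊥)} ≃
            {U : Submodule ℂ (Fin k → ℂ) //
              Module.finrank ℂ U = l ∧ U ⊓ coordKer k l I = ⊥} ×
            Matrix (Fin (n - k)) (Fin l) ℂ,
        ∀ L, ((e L).1 : {U : Submodule ℂ (Fin k → ℂ) //
                Module.finrank ℂ U = l ∧ U ⊓ coordKer k l I = ⊥}).val =
          L.val.map (LinearMap.fst ℂ (Fin k → ℂ) (Fin (n - k) → ℂ))) := by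
  refine ⟨?_, ?_, ?_⟩
  · intro L hdim hker
    rw [← LinearMap.range_domRestrict,
      LinearMap.finrank_range_of_inj (LinearMap.injective_domRestrict_iff.mpr (disjoint_iff.mpr hker)), hdim]
  · intro U hU
    refine ⟨U.map (LinearMap.inl ℂ (Fin k → ℂ) (Fin (n - k) → ℂ)), ?_, ?_, ?_⟩
    · rw [← hU]
      exact (Submodule.equivMapOfInjective _ LinearMap.inl_injective U).finrank_eq.symm
    · rw [Submodule.eq_bot_iff]
      rintro x ⟨⟨u, hu, rfl⟩, hx2⟩
      have : u = 0 := hx2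
      simp [this]
    · rw [← Submodule.map_comp, LinearMap.fst_comp_inl, Submodule.map_id]
  · intro I hI
    refine ⟨⟨fun L => (⟨L.1.map (fstL k n), L.2.2⟩,
        LinearMap.toMatrix' (psiMap k l I n L.1 L.2.1.2 L.2.2.1 L.2.2.2)),
      fun P => ⟨LinearMap.range (graphMap k l I n P.1.1 P.1.2.1 P.1.2.2 P.2),
        ⟨⟨graphL_finrank k l I n _ _ _ _, graphL_inf_ker k l I n _ _ _ _⟩,
          ⟨by rw [graphL_map_fst]; exact P.1.2.1, by rw [graphL_map_fst]; exact P.1.2.2⟩⟩⟩,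
      fun L => Subtype.ext (graphL_psiMap k l I n L.1 L.2.1.2 L.2.2.1 L.2.2.2),
      fun P => Prod.ext (Subtype.ext (graphL_map_fst k l I n P.1.1 P.1.2.1 P.1.2.2 P.2))
        (psiMap_graphL k l I n P.1.1 P.1.2.1 P.1.2.2 P.2 _ _ _)⟩,
      fun L => rfl⟩
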